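/- Let k be a field of characteristic ≠ 2 and k ≥ 1 a natural number; set r = 2k - 1. Let σ be the involution of A_r := k[[x,y]]/(y² - x^{2k}) defined by x ↦ -x, y ↦ -y. Then the k-algebra map i : k[[u,v]]/(v² - u^{k+1}) → k[[x,y]]/(y² - x^{2k}) given by u ↦ x², v ↦ xy is well-defined, injective, and its image equals the subring of σ-invariant elements of A_r. -/

import Mathlib

open MvPowerSeries Finsupp

namespace Stmt10Aux
variable {k : Type*} [Field k]

noncomputable def mk2 (a b : ℕ) : Fin 2 →₀ ℕ := Finsupp.single 0 a + Finsupp.single 1 b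

@[simp] lemma mk2_0 (a b : ℕ) : mk2 a b 0 = a := by simp [mk2]
@[simp] lemma mk2_1 (a b : ℕ) : mk2 a b 1 = b := by simp [mk2, Finsupp.single_apply]

lemma fin2_eq (d : Fin 2 →₀ ℕ) : d = mk2 (d 0) (d 1) := by
  ext x
  fin_cases x
  · simp
  · simp

lemma mk2_ext {d e : Fin 2 →₀ ℕ} (h0 : d 0 = e 0) (h1 : d 1 = e 1) : d = e := by
  rw [fin2_eq d, fin2_eq e, h0, h1]

def cond (d : Fin 2 →₀ ℕ) : Prop := d 1 ≤ d 0 ∧ (d 0 - d 1) % 2 = 0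

instance (d : Fin 2 →₀ ℕ) : Decidable (cond d) := by unfold cond; infer_instance

noncomputable def ψ (d : Fin 2 →₀ ℕ) : Fin 2 →₀ ℕ := mk2 ((d 0 - d 1) / 2) (d 1)

noncomputable def τ (c : Fin 2 →₀ ℕ) : Fin 2 →₀ ℕ := mk2 (2 * c 0 + c 1) (c 1)

@[simp] lemma τ0 (c : Fin 2 →₀ ℕ) : τ c 0 = 2 * c 0 + c 1 := by simp [τ]
@[simp] lemma τ1 (c : Fin 2 →₀ ℕ) : τ c 1 = c 1 := by simp [τ]
@[simp] lemma ψ0 (d : Fin 2 →₀ ℕ) : ψ d 0 = (d 0 - d 1) / 2 := by simp [ψ]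
@[simp] lemma ψ1 (d : Fin 2 →₀ ℕ) : ψ d 1 = d 1 := by simp [ψ]

lemma cond_τ (c : Fin 2 →₀ ℕ) : cond (τ c) := by constructor <;> simp <;> omega

lemma ψτ (c : Fin 2 →₀ ℕ) : ψ (τ c) = c := by
  apply mk2_ext <;> simp <;> omega

lemma τψ {d : Fin 2 →₀ ℕ} (h : cond d) : τ (ψ d) = d := by
  obtain ⟨h1, h2⟩ := h
  apply mk2_ext <;> simp <;> omega

lemma τ_inj : Function.Injective τ := Function.LeftInverse.injective ψτ

lemma τ_add (a b : Fin 2 →₀ ℕ) : τ (a + b) = τ a + τ b := by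
  apply mk2_ext <;> simp <;> ring

lemma τ_zero : τ 0 = 0 := by apply mk2_ext <;> simp

/-- The substitution u ↦ x², v ↦ xy on power series, coefficientwise. -/
noncomputable def φ (f : MvPowerSeries (Fin 2) k) : MvPowerSeries (Fin 2) k :=
  (fun d => if d 1 ≤ d 0 ∧ (d 0 - d 1) % 2 = 0 then
      MvPowerSeries.coeff
        (Finsupp.single (0 : Fin 2) ((d 0 - d 1) / 2) + Finsupp.single 1 (d 1)) f
    else 0)

lemma coeff_φ (f : MvPowerSeries (Fin 2) k) (d : Fin 2 →₀ ℕ) :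
    MvPowerSeries.coeff d (φ f) =
      if cond d then MvPowerSeries.coeff (ψ d) f else 0 := rfl

lemma coeff_φ_τ (f : MvPowerSeries (Fin 2) k) (c : Fin 2 →₀ ℕ) :
    MvPowerSeries.coeff (τ c) (φ f) = MvPowerSeries.coeff c f := by
  rw [coeff_φ, if_pos (cond_τ c), ψτ]

end Stmt10Aux
namespace Stmt10Aux
variable {k : Type*} [Field k]

lemma ψ_eq_zero_iff {d : Fin 2 →₀ ℕ} (hd : cond d) : ψ d = 0 ↔ d = 0 := by
  constructor
  · intro h
    have := τψ hd
    rw [h, τ_zero] at this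
    exact this.symm
  · rintro rfl
    apply mk2_ext <;> simp

lemma cond_zero : cond (0 : Fin 2 →₀ ℕ) := ⟨le_refl _, by simp⟩

lemma φ_mul (f g : MvPowerSeries (Fin 2) k) : φ (f * g) = φ f * φ g := by
  classical
  apply MvPowerSeries.ext
  intro d
  rw [coeff_φ]
  conv_rhs => rw [MvPowerSeries.coeff_mul]
  have hne : ∀ p ∈ Finset.HasAntidiagonal.antidiagonal d,
      MvPowerSeries.coeff p.1 (φ f) * MvPowerSeries.coeff p.2 (φ g) ≠ 0 →
        cond p.1 ∧ cond p.2 := by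
    intro p _ hp
    by_cases h1 : cond p.1
    · by_cases h2 : cond p.2
      · exact ⟨h1, h2⟩
      · exfalso; apply hp; rw [coeff_φ g, if_neg h2, mul_zero]
    · exfalso; apply hp; rw [coeff_φ f, if_neg h1, zero_mul]
  rw [← Finset.sum_filter_of_ne hne]
  by_cases hd : cond d
  · rw [if_pos hd, MvPowerSeries.coeff_mul]
    refine Finset.sum_nbij' (fun p => (τ p.1, τ p.2)) (fun p => (ψ p.1, ψ p.2)) ?_ ?_ ?_ ?_ ?_
    · intro p hp
      rw [Finset.HasAntidiagonal.mem_antidiagonal] at hp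
      simp only [Finset.mem_filter, Finset.HasAntidiagonal.mem_antidiagonal]
      exact ⟨by rw [← τ_add, hp, τψ hd], cond_τ _, cond_τ _⟩
    · intro p hp
      simp only [Finset.mem_filter, Finset.HasAntidiagonal.mem_antidiagonal] at hp
      obtain ⟨hsum, h1, h2⟩ := hp
      rw [Finset.HasAntidiagonal.mem_antidiagonal]
      apply τ_inj
      rw [τ_add, τψ h1, τψ h2, hsum, τψ hd]
    · intro p _
      have : (ψ (τ p.1), ψ (τ p.2)) = p := by rw [ψτ, ψτ]
      exact this
    · intro p hp
      simp only [Finset.mem_filter, Finset.HasAntidiagonal.mem_antidiagonal] at hp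
      have : (τ (ψ p.1), τ (ψ p.2)) = p := by rw [τψ hp.2.1, τψ hp.2.2]
      exact this
    · intro p _
      rw [coeff_φ f, coeff_φ g, if_pos (cond_τ _), if_pos (cond_τ _), ψτ, ψτ]
  · rw [if_neg hd]
    symm
    apply Finset.sum_eq_zero
    intro p hp
    simp only [Finset.mem_filter, Finset.HasAntidiagonal.mem_antidiagonal] at hp
    exfalso
    apply hd
    rw [← hp.1, ← τψ hp.2.1, ← τψ hp.2.2, ← τ_add]
    exact cond_τ _

lemma φ_monomial (e : Fin 2 →₀ ℕ) (a : k) :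
    φ (MvPowerSeries.monomial e a) = MvPowerSeries.monomial (τ e) a := by
  apply MvPowerSeries.ext
  intro d
  rw [coeff_φ]
  conv_rhs => rw [MvPowerSeries.coeff_monomial]
  by_cases hd : cond d
  · rw [if_pos hd, MvPowerSeries.coeff_monomial]
    by_cases he : ψ d = e
    · rw [if_pos he, if_pos (by rw [← he, τψ hd])]
    · rw [if_neg he, if_neg (fun h => he (by rw [h, ψτ]))]
  · rw [if_neg hd, if_neg (fun h : d = τ e => hd (h ▸ cond_τ e))]

lemma φ_one : φ (1 : MvPowerSeries (Fin 2) k) = 1 := by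
  classical
  apply MvPowerSeries.ext
  intro d
  rw [coeff_φ]
  conv_rhs => rw [MvPowerSeries.coeff_one]
  by_cases hd : cond d
  · rw [if_pos hd, MvPowerSeries.coeff_one]
    by_cases h0 : d = 0
    · rw [if_pos h0, if_pos ((ψ_eq_zero_iff hd).mpr h0)]
    · rw [if_neg h0, if_neg (fun h => h0 ((ψ_eq_zero_iff hd).mp h))]
  · rw [if_neg hd, if_neg (fun h : d = 0 => hd (h ▸ cond_zero))]

lemma φ_add (f g : MvPowerSeries (Fin 2) k) : φ (f + g) = φ f + φ g := by
  apply MvPowerSeries.ext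
  intro d
  simp only [map_add, coeff_φ]
  split_ifs <;> simp

lemma φ_zero : φ (0 : MvPowerSeries (Fin 2) k) = 0 := by
  apply MvPowerSeries.ext
  intro d
  simp [coeff_φ]

noncomputable def φA : MvPowerSeries (Fin 2) k →ₐ[k] MvPowerSeries (Fin 2) k where
  toFun := φ
  map_one' := φ_one
  map_mul' := φ_mul
  map_zero' := φ_zero
  map_add' := φ_add
  commutes' := by
    intro a
    rw [MvPowerSeries.algebraMap_apply, Algebra.algebraMap_self_apply]
    apply MvPowerSeries.ext
    intro d
    rw [coeff_φ]
    conv_rhs => rw [MvPowerSeries.coeff_C]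
    by_cases hd : cond d
    · rw [if_pos hd, MvPowerSeries.coeff_C]
      by_cases h0 : d = 0
      · rw [if_pos h0, if_pos ((ψ_eq_zero_iff hd).mpr h0)]
      · rw [if_neg h0, if_neg (fun h => h0 ((ψ_eq_zero_iff hd).mp h))]
    · rw [if_neg hd, if_neg (fun h : d = 0 => hd (h ▸ cond_zero))]

lemma φ_inj : Function.Injective (φ : MvPowerSeries (Fin 2) k → MvPowerSeries (Fin 2) k) := by
  intro f g h
  apply MvPowerSeries.ext
  intro c
  rw [← coeff_φ_τ f c, ← coeff_φ_τ g c, h]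

end Stmt10Aux
namespace Stmt10Aux
variable {k : Type*} [Field k]

lemma sub_app (e f : Fin 2 →₀ ℕ) (x : Fin 2) : (e - f) x = e x - f x :=
  Finsupp.tsub_apply e f x

@[simp] lemma single0_app0 (n : ℕ) : (Finsupp.single (0 : Fin 2) n) 0 = n := by simp
@[simp] lemma single0_app1 (n : ℕ) : (Finsupp.single (0 : Fin 2) n) 1 = 0 := by
  simp [Finsupp.single_apply]
@[simp] lemma single1_app0 (n : ℕ) : (Finsupp.single (1 : Fin 2) n) 0 = 0 := by
  simp [Finsupp.single_apply]
@[simp] lemma single1_app1 (n : ℕ) : (Finsupp.single (1 : Fin 2) n) 1 = n := by simp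

/-- coefficient of `h * (X1^2 - X0^n)` -/
lemma coeff_mul_G (n : ℕ) (h : MvPowerSeries (Fin 2) k) (e : Fin 2 →₀ ℕ) :
    MvPowerSeries.coeff e (h * ((MvPowerSeries.X 1 : MvPowerSeries (Fin 2) k) ^ 2 -
        (MvPowerSeries.X 0 : MvPowerSeries (Fin 2) k) ^ n)) =
      (if 2 ≤ e 1 then MvPowerSeries.coeff (e - Finsupp.single 1 2) h else 0) -
      (if n ≤ e 0 then MvPowerSeries.coeff (e - Finsupp.single 0 n) h else 0) := by
  rw [mul_sub, map_sub, MvPowerSeries.X_pow_eq, MvPowerSeries.X_pow_eq,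
    MvPowerSeries.coeff_mul_monomial, MvPowerSeries.coeff_mul_monomial]
  congr 1
  · by_cases hle : Finsupp.single (1 : Fin 2) 2 ≤ e
    · rw [if_pos hle, if_pos (Finsupp.single_le_iff.mp hle), mul_one]
    · rw [if_neg hle, if_neg (fun hh => hle (Finsupp.single_le_iff.mpr hh))]
  · by_cases hle : Finsupp.single (0 : Fin 2) n ≤ e
    · rw [if_pos hle, if_pos (Finsupp.single_le_iff.mp hle), mul_one]
    · rw [if_neg hle, if_neg (fun hh => hle (Finsupp.single_le_iff.mpr hh))]

lemma support_lemma {K : ℕ} (hK : 1 ≤ K) (f h : MvPowerSeries (Fin 2) k)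
    (heq : φ f = h * ((MvPowerSeries.X 1 : MvPowerSeries (Fin 2) k) ^ 2 -
      (MvPowerSeries.X 0 : MvPowerSeries (Fin 2) k) ^ (2 * K))) :
    ∀ d : Fin 2 →₀ ℕ, ¬(d 1 < d 0 ∧ (d 0 - d 1) % 2 = 0) →
      MvPowerSeries.coeff d h = 0 := by
  suffices H : ∀ n : ℕ, ∀ d : Fin 2 →₀ ℕ, d 0 = n →
      ¬(d 1 < d 0 ∧ (d 0 - d 1) % 2 = 0) → MvPowerSeries.coeff d h = 0 by
    exact fun d hd => H (d 0) d rfl hd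
  intro n
  induction n using Nat.strong_induction_on with
  | _ n IH =>
    intro d hd0 hbad
    set e := d + Finsupp.single 1 2 with he_def
    have he0 : e 0 = d 0 := by simp [he_def, Finsupp.add_apply]
    have he1 : e 1 = d 1 + 2 := by simp [he_def, Finsupp.add_apply]
    have hnc : ¬ cond e := by
      unfold cond
      rw [he0, he1]
      omega
    have h0 : MvPowerSeries.coeff e (φ f) = 0 := by rw [coeff_φ, if_neg hnc]
    rw [heq, coeff_mul_G] at h0
    have hsub1 : e - Finsupp.single 1 2 = d := by
      apply mk2_ext <;> rw [sub_app] <;> simp [he0, he1]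
    rw [if_pos (by omega : 2 ≤ e 1), hsub1] at h0
    by_cases hc : 2 * K ≤ e 0
    · rw [if_pos hc] at h0
      have hd' : MvPowerSeries.coeff (e - Finsupp.single 0 (2 * K)) h = 0 := by
        apply IH (d 0 - 2 * K) (by omega) _ (by rw [sub_app, he0]; simp)
        rw [sub_app, sub_app, he0, he1]
        simp only [single0_app0, single0_app1, Nat.sub_zero]
        omega
      rw [hd', sub_zero] at h0
      exact h0
    · rw [if_neg hc, sub_zero] at h0
      exact h0

end Stmt10Aux
namespace Stmt10Aux
variable {k : Type*} [Field k]

noncomputable def qOf (h : MvPowerSeries (Fin 2) k) : MvPowerSeries (Fin 2) k :=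
  fun c => MvPowerSeries.coeff (τ c + Finsupp.single 0 2) h

lemma coeff_qOf (h : MvPowerSeries (Fin 2) k) (c : Fin 2 →₀ ℕ) :
    MvPowerSeries.coeff c (qOf h) = MvPowerSeries.coeff (τ c + Finsupp.single 0 2) h := rfl

lemma eq_q_mul {K : ℕ} (hK : 1 ≤ K) (f h : MvPowerSeries (Fin 2) k)
    (heq : φ f = h * ((MvPowerSeries.X 1 : MvPowerSeries (Fin 2) k) ^ 2 -
      (MvPowerSeries.X 0 : MvPowerSeries (Fin 2) k) ^ (2 * K))) :
    f = qOf h *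
      ((MvPowerSeries.X 1 : MvPowerSeries (Fin 2) k) ^ 2 -
        (MvPowerSeries.X 0 : MvPowerSeries (Fin 2) k) ^ (K + 1)) := by
  apply MvPowerSeries.ext
  intro c
  rw [← coeff_φ_τ f c, heq, coeff_mul_G, coeff_mul_G]
  congr 1
  · -- first terms
    rw [τ1]
    by_cases hc : 2 ≤ c 1
    · rw [if_pos hc, if_pos hc, coeff_qOf]
      congr 2
      apply mk2_ext <;> simp [sub_app, Finsupp.add_apply] <;> omega
    · rw [if_neg hc, if_neg hc]
  · -- second terms
    by_cases hc : K + 1 ≤ c 0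
    · rw [if_pos hc, if_pos (by rw [τ0]; omega), coeff_qOf]
      congr 2
      apply mk2_ext <;> simp [sub_app, Finsupp.add_apply] <;> omega
    · rw [if_neg hc]
      by_cases hc2 : 2 * K ≤ (τ c) 0
      · rw [if_pos hc2]
        rw [τ0] at hc2
        apply support_lemma hK f h heq
        simp [sub_app]
        omega
      · rw [if_neg hc2]

end Stmt10Aux
namespace Stmt10Aux
variable {k : Type*} [Field k]

noncomputable def wOf (K : ℕ) (f : MvPowerSeries (Fin 2) k) : MvPowerSeries (Fin 2) k :=
  fun d => ∑ s ∈ Finset.range (d 0 / (2 * K) + 1),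
    MvPowerSeries.coeff (mk2 (d 0 - 2 * K * s) (d 1 + 2 + 2 * s)) f

lemma coeff_wOf (K : ℕ) (f : MvPowerSeries (Fin 2) k) (d : Fin 2 →₀ ℕ) :
    MvPowerSeries.coeff d (wOf K f) = ∑ s ∈ Finset.range (d 0 / (2 * K) + 1),
      MvPowerSeries.coeff (mk2 (d 0 - 2 * K * s) (d 1 + 2 + 2 * s)) f := rfl

lemma coeff_mk2_congr (f : MvPowerSeries (Fin 2) k) {a b a' b' : ℕ}
    (ha : a = a') (hb : b = b') :
    MvPowerSeries.coeff (mk2 a b) f = MvPowerSeries.coeff (mk2 a' b') f := by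
  rw [ha, hb]

lemma reduce_support {K : ℕ} (hK : 1 ≤ K) (f : MvPowerSeries (Fin 2) k)
    (hev : ∀ d : Fin 2 →₀ ℕ, (d 0 + d 1) % 2 = 1 → MvPowerSeries.coeff d f = 0) :
    ∀ e : Fin 2 →₀ ℕ, ¬ cond e →
      MvPowerSeries.coeff e
        (f - wOf K f * ((MvPowerSeries.X 1 : MvPowerSeries (Fin 2) k) ^ 2 -
          (MvPowerSeries.X 0 : MvPowerSeries (Fin 2) k) ^ (2 * K))) = 0 := by
  intro e hce
  rw [map_sub, coeff_mul_G]
  have hT0 : MvPowerSeries.coeff (mk2 (e 0 - 2 * K * 0) (e 1 + 2 * 0)) f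
      = MvPowerSeries.coeff e f := by
    rw [Nat.mul_zero, Nat.sub_zero, Nat.mul_zero, Nat.add_zero, ← fin2_eq]
  by_cases hA : 2 ≤ e 1
  · rw [if_pos hA, coeff_wOf]
    have h0 : (e - (Finsupp.single 1 2 : Fin 2 →₀ ℕ)) 0 = e 0 := by simp [sub_app]
    have h1 : (e - (Finsupp.single 1 2 : Fin 2 →₀ ℕ)) 1 = e 1 - 2 := by simp [sub_app]
    rw [h0, h1]
    have hsum1 : ∑ s ∈ Finset.range (e 0 / (2 * K) + 1),
        MvPowerSeries.coeff (mk2 (e 0 - 2 * K * s) (e 1 - 2 + 2 + 2 * s)) f =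
        ∑ s ∈ Finset.range (e 0 / (2 * K) + 1),
        MvPowerSeries.coeff (mk2 (e 0 - 2 * K * s) (e 1 + 2 * s)) f :=
      Finset.sum_congr rfl fun s _ => coeff_mk2_congr f rfl (by omega)
    rw [hsum1, Finset.sum_range_succ', hT0]
    by_cases hB : 2 * K ≤ e 0
    · rw [if_pos hB, coeff_wOf]
      have h0' : (e - (Finsupp.single 0 (2 * K) : Fin 2 →₀ ℕ)) 0 = e 0 - 2 * K := by
        simp [sub_app]
      have h1' : (e - (Finsupp.single 0 (2 * K) : Fin 2 →₀ ℕ)) 1 = e 1 := by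
        simp [sub_app]
      rw [h0', h1']
      have hcount : (e 0 - 2 * K) / (2 * K) + 1 = e 0 / (2 * K) := by
        have h2K : 0 < 2 * K := by omega
        have := Nat.add_div_right (e 0 - 2 * K) h2K
        rw [Nat.sub_add_cancel hB] at this
        omega
      have hsum2 : ∑ s ∈ Finset.range ((e 0 - 2 * K) / (2 * K) + 1),
          MvPowerSeries.coeff (mk2 (e 0 - 2 * K - 2 * K * s) (e 1 + 2 + 2 * s)) f =
          ∑ s ∈ Finset.range (e 0 / (2 * K)),
          MvPowerSeries.coeff (mk2 (e 0 - 2 * K * (s + 1)) (e 1 + 2 * (s + 1))) f := by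
        rw [hcount]
        refine Finset.sum_congr rfl fun s _ => coeff_mk2_congr f ?_ (by omega)
        rw [Nat.mul_succ, Nat.sub_sub, Nat.add_comm]
      rw [hsum2]
      ring
    · rw [if_neg hB]
      have hM : e 0 / (2 * K) = 0 := Nat.div_eq_of_lt (by omega)
      rw [hM]
      simp
  · rw [if_neg hA]
    have hodd : (e 0 + e 1) % 2 = 1 := by
      unfold cond at hce
      omega
    have hfe : MvPowerSeries.coeff e f = 0 := hev e hodd
    by_cases hB : 2 * K ≤ e 0
    · rw [if_pos hB, coeff_wOf, hfe]
      have h0' : (e - (Finsupp.single 0 (2 * K) : Fin 2 →₀ ℕ)) 0 = e 0 - 2 * K := by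
        simp [sub_app]
      have h1' : (e - (Finsupp.single 0 (2 * K) : Fin 2 →₀ ℕ)) 1 = e 1 := by
        simp [sub_app]
      rw [h0', h1']
      have hz : ∑ s ∈ Finset.range ((e 0 - 2 * K) / (2 * K) + 1),
          MvPowerSeries.coeff (mk2 (e 0 - 2 * K - 2 * K * s) (e 1 + 2 + 2 * s)) f = 0 := by
        apply Finset.sum_eq_zero
        intro s hs
        rw [Finset.mem_range] at hs
        have hs' : s ≤ (e 0 - 2 * K) / (2 * K) := by omega
        have hmul : s * (2 * K) ≤ e 0 - 2 * K :=
          (Nat.le_div_iff_mul_le (by omega)).mp hs'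
        apply hev
        rw [mk2_0, mk2_1]
        rw [show s * (2 * K) = 2 * (K * s) by ring] at hmul
        rw [show 2 * K * s = 2 * (K * s) by ring]
        generalize K * s = m at hmul ⊢
        omega
      rw [hz]
      simp
    · rw [if_neg hB, hfe]
      simp

noncomputable def sOf (f' : MvPowerSeries (Fin 2) k) : MvPowerSeries (Fin 2) k :=
  fun c => MvPowerSeries.coeff (τ c) f'

lemma φ_section (f' : MvPowerSeries (Fin 2) k)
    (hs : ∀ e : Fin 2 →₀ ℕ, ¬ cond e → MvPowerSeries.coeff e f' = 0) :
    φ (sOf f') = f' := by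
  apply MvPowerSeries.ext
  intro e
  rw [coeff_φ]
  by_cases hce : cond e
  · rw [if_pos hce]
    show MvPowerSeries.coeff (τ (ψ e)) f' = _
    rw [τψ hce]
  · rw [if_neg hce, (hs e hce)]

end Stmt10Aux
namespace Stmt10Aux
variable {k : Type*} [Field k]

lemma φA_gen (K : ℕ) :
    φA ((MvPowerSeries.X 1 : MvPowerSeries (Fin 2) k) ^ 2 -
        (MvPowerSeries.X 0 : MvPowerSeries (Fin 2) k) ^ (K + 1)) =
      (MvPowerSeries.X 0 : MvPowerSeries (Fin 2) k) ^ 2 *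
        ((MvPowerSeries.X 1 : MvPowerSeries (Fin 2) k) ^ 2 -
          (MvPowerSeries.X 0 : MvPowerSeries (Fin 2) k) ^ (2 * K)) := by
  have e0 : (MvPowerSeries.X 0 : MvPowerSeries (Fin 2) k) =
      MvPowerSeries.monomial (Finsupp.single 0 1) 1 := rfl
  have e1 : (MvPowerSeries.X 1 : MvPowerSeries (Fin 2) k) =
      MvPowerSeries.monomial (Finsupp.single 1 1) 1 := rfl
  have hx0 : φA (MvPowerSeries.X 0 : MvPowerSeries (Fin 2) k) =
      (MvPowerSeries.X 0 : MvPowerSeries (Fin 2) k) ^ 2 := by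
    show φ (MvPowerSeries.X 0 : MvPowerSeries (Fin 2) k) = _
    rw [e0, φ_monomial, pow_two, MvPowerSeries.monomial_mul_monomial, one_mul]
    congr 2
    apply mk2_ext <;> simp [Finsupp.add_apply]
  have hx1 : φA (MvPowerSeries.X 1 : MvPowerSeries (Fin 2) k) =
      MvPowerSeries.X 0 * MvPowerSeries.X 1 := by
    show φ (MvPowerSeries.X 1 : MvPowerSeries (Fin 2) k) = _
    rw [e1, φ_monomial, e0, MvPowerSeries.monomial_mul_monomial, one_mul]
    congr 2
    apply mk2_ext <;> simp [Finsupp.add_apply]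
  rw [map_sub, map_pow, map_pow, hx0, hx1]
  ring

lemma coe_φA : ⇑(φA : MvPowerSeries (Fin 2) k →ₐ[k] MvPowerSeries (Fin 2) k) = φ := rfl

end Stmt10Aux

open Stmt10Aux in
theorem stmt_10 {k : Type*} [Field k] (h2 : (2 : k) ≠ 0) (K : ℕ) (hK : 1 ≤ K)
    (r : ℕ) (hr : r = 2 * K - 1)
    (I : Ideal (MvPowerSeries (Fin 2) k))
    (hI : I = Ideal.span {(MvPowerSeries.X 1 : MvPowerSeries (Fin 2) k) ^ 2 -
      (MvPowerSeries.X 0 : MvPowerSeries (Fin 2) k) ^ (2 * K)})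
    (J : Ideal (MvPowerSeries (Fin 2) k))
    (hJ : J = Ideal.span {(MvPowerSeries.X 1 : MvPowerSeries (Fin 2) k) ^ 2 -
      (MvPowerSeries.X 0 : MvPowerSeries (Fin 2) k) ^ (K + 1)})
    (σ : (MvPowerSeries (Fin 2) k ⧸ I) ≃ₐ[k] (MvPowerSeries (Fin 2) k ⧸ I))
    (hσ : ∀ f : MvPowerSeries (Fin 2) k,
      σ (Ideal.Quotient.mk I f) =
        Ideal.Quotient.mk I
          ((fun d => (-1 : k) ^ (d 0 + d 1) * MvPowerSeries.coeff d f) :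
            MvPowerSeries (Fin 2) k)) :
    ∃ i : (MvPowerSeries (Fin 2) k ⧸ J) →ₐ[k] (MvPowerSeries (Fin 2) k ⧸ I),
      (∀ f : MvPowerSeries (Fin 2) k,
        i (Ideal.Quotient.mk J f) =
          Ideal.Quotient.mk I
            ((fun d =>
              if d 1 ≤ d 0 ∧ (d 0 - d 1) % 2 = 0 then
                MvPowerSeries.coeff
                  (Finsupp.single (0 : Fin 2) ((d 0 - d 1) / 2) + Finsupp.single 1 (d 1)) f
              else 0) : MvPowerSeries (Fin 2) k)) ∧
      Function.Injective i ∧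
      Set.range i = {a | σ a = a} := by
  -- the G generator
  set G : MvPowerSeries (Fin 2) k :=
    (MvPowerSeries.X 1 : MvPowerSeries (Fin 2) k) ^ 2 -
      (MvPowerSeries.X 0 : MvPowerSeries (Fin 2) k) ^ (2 * K) with hG
  set GJ : MvPowerSeries (Fin 2) k :=
    (MvPowerSeries.X 1 : MvPowerSeries (Fin 2) k) ^ 2 -
      (MvPowerSeries.X 0 : MvPowerSeries (Fin 2) k) ^ (K + 1) with hGJ
  have hker : ∀ a ∈ J, ((Ideal.Quotient.mkₐ k I).comp φA) a = 0 := by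
    intro a ha
    rw [hJ, Ideal.mem_span_singleton] at ha
    obtain ⟨c, rfl⟩ := ha
    show Ideal.Quotient.mk I (φA (GJ * c)) = 0
    rw [map_mul, φA_gen K, Ideal.Quotient.eq_zero_iff_mem, hI]
    rw [Ideal.mem_span_singleton]
    exact ⟨(MvPowerSeries.X 0 : MvPowerSeries (Fin 2) k) ^ 2 * φA c, by ring⟩
  set i0 := Ideal.Quotient.liftₐ J ((Ideal.Quotient.mkₐ k I).comp φA) hker with hi0def
  have hi : ∀ f : MvPowerSeries (Fin 2) k,
      i0 (Ideal.Quotient.mk J f) = Ideal.Quotient.mk I (φ f) := fun f =>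
    AlgHom.congr_fun (Ideal.Quotient.liftₐ_comp J ((Ideal.Quotient.mkₐ k I).comp φA) hker) f
  have hmemJ : ∀ f : MvPowerSeries (Fin 2) k, φ f ∈ I → f ∈ J := by
    intro f hf
    rw [hI, Ideal.mem_span_singleton] at hf
    obtain ⟨c, hc⟩ := hf
    have heq := eq_q_mul hK f c (by rw [hc, mul_comm])
    rw [hJ, Ideal.mem_span_singleton]
    exact ⟨qOf c, heq.trans (mul_comm _ _)⟩
  refine ⟨i0, fun f => hi f, ?_, ?_⟩
  · -- injectivity
    intro a b hab
    obtain ⟨f, rfl⟩ := Ideal.Quotient.mk_surjective a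
    obtain ⟨g, rfl⟩ := Ideal.Quotient.mk_surjective b
    rw [hi f, hi g] at hab
    have hsub : φ f - φ g ∈ I := Ideal.Quotient.eq.mp hab
    have hsub' : φ (f - g) ∈ I := by
      have : φ (f - g) = φ f - φ g := map_sub φA f g
      rw [this]
      exact hsub
    exact Ideal.Quotient.eq.mpr (hmemJ (f - g) hsub')
  · -- range
    ext a
    simp only [Set.mem_range, Set.mem_setOf_eq]
    constructor
    · rintro ⟨b, rfl⟩
      obtain ⟨f, rfl⟩ := Ideal.Quotient.mk_surjective b
      rw [hi f, hσ (φ f)]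
      congr 1
      apply MvPowerSeries.ext
      intro d
      show (-1 : k) ^ (d 0 + d 1) * MvPowerSeries.coeff d (φ f) =
        MvPowerSeries.coeff d (φ f)
      by_cases hc : cond d
      · have hev : Even (d 0 + d 1) := by
          obtain ⟨hc1, hc2⟩ := hc
          rw [Nat.even_iff]
          omega
        rw [hev.neg_one_pow, one_mul]
      · rw [coeff_φ, if_neg hc, mul_zero]
    · intro ha
      obtain ⟨f₀, rfl⟩ := Ideal.Quotient.mk_surjective a
      rw [hσ f₀] at ha
      set t : MvPowerSeries (Fin 2) k :=
        (fun d => (-1 : k) ^ (d 0 + d 1) * MvPowerSeries.coeff d f₀) with htdef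
      have ht : t - f₀ ∈ I := Ideal.Quotient.eq.mp ha
      set f : MvPowerSeries (Fin 2) k := MvPowerSeries.C (σ := Fin 2) (R := k) 2⁻¹ * (f₀ + t) with hfdef
      have hC2 : (MvPowerSeries.C (σ := Fin 2) (R := k)) (2 : k) = (2 : MvPowerSeries (Fin 2) k) :=
        map_ofNat _ 2
      have h21 : MvPowerSeries.C (σ := Fin 2) (R := k) 2⁻¹ * 2 = 1 := by
        rw [← hC2, ← map_mul, inv_mul_cancel₀ h2, map_one]
      have hffo : f - f₀ = MvPowerSeries.C (σ := Fin 2) (R := k) 2⁻¹ * (t - f₀) := by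
        rw [hfdef]
        linear_combination f₀ * h21
      have hmk : Ideal.Quotient.mk I f = Ideal.Quotient.mk I f₀ :=
        Ideal.Quotient.eq.mpr (hffo ▸ Ideal.mul_mem_left I _ ht)
      have hev : ∀ d : Fin 2 →₀ ℕ, (d 0 + d 1) % 2 = 1 → MvPowerSeries.coeff d f = 0 := by
        intro d hd
        rw [hfdef, MvPowerSeries.coeff_C_mul, map_add]
        have hcot : MvPowerSeries.coeff d t =
            (-1 : k) ^ (d 0 + d 1) * MvPowerSeries.coeff d f₀ := rfl
        rw [hcot, (Nat.odd_iff.mpr hd).neg_one_pow]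
        ring
      have hred := reduce_support hK f hev
      set f' : MvPowerSeries (Fin 2) k := f - wOf K f * G with hf'def
      have hmk2 : Ideal.Quotient.mk I f' = Ideal.Quotient.mk I f := by
        apply Ideal.Quotient.eq.mpr
        have hdiff : f' - f = -(wOf K f * G) := by rw [hf'def]; ring
        rw [hdiff, hI]
        exact neg_mem (Ideal.mem_span_singleton.mpr ⟨wOf K f, mul_comm _ _⟩)
      refine ⟨Ideal.Quotient.mk J (sOf f'), ?_⟩
      calc i0 (Ideal.Quotient.mk J (sOf f')) = Ideal.Quotient.mk I (φ (sOf f')) := hi _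
        _ = Ideal.Quotient.mk I f' := by rw [φ_section f' (fun e he => hred e he)]
        _ = Ideal.Quotient.mk I f := hmk2
        _ = Ideal.Quotient.mk I f₀ := hmk
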